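/- Let R be a local ring that is not a division ring. Then R is left and right almost small: R as a left R-module is τ_cG-torsion, i.e. for all left submodules U ⊊ V ⊆ R the quotient V/U contains a nonzero small submodule, and the analogous statement holds for R as a right R-module. -/

import Mathlib

universe u

/-- A left `R`-module `K` is a *small module* if there exist a left `R`-module `L` and an
injective `R`-linear map `f : K → L` whose image is a superfluous submodule of `L`. -/
def IsSmallModule (R : Type u) [Ring R] (K : Type u) [AddCommGroup K] [Module R K] : Prop :=
  ∃ (L : Type u) (_ : AddCommGroup L) (_ : Module R L) (f : K →ₗ[R] L),
    Function.Injective f ∧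
      ∀ X : Submodule R L, LinearMap.range f ⊔ X = ⊤ → X = ⊤

/-- `Z*(M)` is the sum of all submodules of `M` that are small modules. -/
def ZStar (R : Type u) [Ring R] (M : Type u) [AddCommGroup M] [Module R M] : Submodule R M :=
  sSup {N : Submodule R M | IsSmallModule R ↥N}

/-- A left `R`-module `M` is `τ_cG`-torsion if `Z*(V/U) ≠ 0` for all submodules `U ⊊ V ⊆ M`. -/
def IsCGTorsion (R : Type u) [Ring R] (M : Type u) [AddCommGroup M] [Module R M] : Prop :=
  ∀ U V : Submodule R M, U < V → ZStar R (↥V ⧸ Submodule.comap V.subtype U) ≠ ⊥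

section RingLemmas
variable {R : Type u} [Ring R] [IsLocalRing R]

theorem my_isUnit_or (a : R) : IsUnit a ∨ IsUnit (1 - a) :=
  IsLocalRing.isUnit_or_isUnit_of_add_one (by noncomm_ring)

/-- In a (possibly noncommutative) local ring, if `r * a` is a unit then `a` is a unit. -/
theorem my_isUnit_of_mul {r a : R} (h : IsUnit (r * a)) : IsUnit a := by
  obtain ⟨u, hu⟩ := h
  have hc : ((↑u⁻¹ : R) * r) * a = 1 := by
    rw [mul_assoc, ← hu, Units.inv_mul]
  set c : R := (↑u⁻¹ : R) * r with hcdef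
  have he : (a * c) * (a * c) = a * c := by
    calc (a * c) * (a * c) = a * ((c * a) * c) := by noncomm_ring
    _ = a * c := by rw [hc, one_mul]
  rcases my_isUnit_or (a * c) with he1 | he2
  · have h1 : a * c = 1 := by
      exact he1.mul_left_cancel (show a * c * (a * c) = a * c * 1 by rw [mul_one, he])
    exact ⟨⟨a, c, h1, hc⟩, rfl⟩
  · exfalso
    have hz : (1 - a * c) * a = 0 := by
      have h2 : a * (c * a) = a := by rw [hc, mul_one]
      calc (1 - a * c) * a = a - a * (c * a) := by noncomm_ring
      _ = 0 := by rw [h2, sub_self]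
    obtain ⟨w, hw⟩ := he2
    have ha0 : a = 0 := by
      have h3 := congrArg (fun x => (↑w⁻¹ : R) * x) hz
      simp only [mul_zero] at h3
      rwa [← hw, ← mul_assoc, Units.inv_mul, one_mul] at h3
    rw [ha0, mul_zero] at hc
    exact zero_ne_one hc

theorem my_nonunit_mul {a : R} (r : R) (ha : ¬ IsUnit a) : ¬ IsUnit (r * a) :=
  fun h => ha (my_isUnit_of_mul h)

theorem my_nonunits_add {a b : R} (ha : ¬ IsUnit a) (hb : ¬ IsUnit b) : ¬ IsUnit (a + b) := by
  intro h
  obtain ⟨u, hu⟩ := h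
  have h1 : (↑u⁻¹ : R) * a + (↑u⁻¹ : R) * b = 1 := by
    rw [← mul_add, ← hu, Units.inv_mul]
  rcases IsLocalRing.isUnit_or_isUnit_of_add_one h1 with h | h
  · exact ha (my_isUnit_of_mul h)
  · exact hb (my_isUnit_of_mul h)

theorem my_unit_one_sub {a : R} (ha : ¬ IsUnit a) : IsUnit (1 - a) :=
  (my_isUnit_or a).resolve_left ha
/-- the nonunits as a left submodule of R -/
def nonunitsSubmodule (R : Type u) [Ring R] [IsLocalRing R] : Submodule R R where
  carrier := {x | ¬ IsUnit x}
  zero_mem' := by simp [not_isUnit_zero]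
  add_mem' := fun ha hb => my_nonunits_add ha hb
  smul_mem' := fun r x hx => my_nonunit_mul r hx

end RingLemmas


section ModuleLemmas
variable {R M : Type u} [Ring R] [IsLocalRing R] [AddCommGroup M] [Module R M]

/-- Case A: `b` a nonunit with `b • v ≠ 0`: span {b•v} is small (superfluous in span {v}). -/
theorem smallA {b : R} (hb : ¬ IsUnit b) {v : M} (hbv : b • v ≠ 0) :
    IsSmallModule R ↥(Submodule.span R {b • v}) := by
  have hle : Submodule.span R {b • v} ≤ Submodule.span R {v} :=
    Submodule.span_le.2 (by
      rintro _ rfl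
      exact Submodule.smul_mem _ b (Submodule.mem_span_singleton_self v))
  refine ⟨↥(Submodule.span R {v}), inferInstance, inferInstance, Submodule.inclusion hle,
    Submodule.inclusion_injective hle, ?_⟩
  intro X hX
  set vv : ↥(Submodule.span R {v}) := ⟨v, Submodule.mem_span_singleton_self v⟩ with hvv
  have hmem : vv ∈ LinearMap.range (Submodule.inclusion hle) ⊔ X := hX ▸ Submodule.mem_top
  obtain ⟨y, hy, x, hx, hyx⟩ := Submodule.mem_sup.1 hmem
  rw [Submodule.range_inclusion] at hy
  obtain ⟨r, hr⟩ := Submodule.mem_span_singleton.1 hy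
  have hxval : (x : M) = (1 - r * b) • v := by
    have hsum : (y : M) + (x : M) = v := congrArg Subtype.val hyx
    rw [sub_smul, one_smul, mul_smul, hr, Submodule.subtype_apply]
    exact eq_sub_of_add_eq' hsum
  obtain ⟨w, hw⟩ := my_unit_one_sub (my_nonunit_mul r hb)
  have hvvX : vv ∈ X := by
    have : vv = (↑w⁻¹ : R) • x := by
      apply Subtype.ext
      show v = (↑w⁻¹ : R) • (x : M)
      rw [hxval, ← mul_smul, ← hw, Units.inv_mul, one_smul]
    exact this ▸ X.smul_mem _ hx
  rw [eq_top_iff]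
  rintro ⟨z, hz⟩ _
  obtain ⟨s, hs⟩ := Submodule.mem_span_singleton.1 hz
  have : (⟨z, hz⟩ : ↥(Submodule.span R {v})) = s • vv := Subtype.ext (by simp [← hs, hvv])
  exact this ▸ X.smul_mem s hvvX

/-- Case B: all nonunits annihilate `v ≠ 0`, and `a` is a nonzero nonunit. -/
theorem smallB {a : R} (ha0 : a ≠ 0) (ha : ¬ IsUnit a) {v : M} (hv : v ≠ 0)
    (hann : ∀ b : R, ¬ IsUnit b → b • v = 0) :
    IsSmallModule R ↥(LinearMap.range (LinearMap.toSpanSingleton R M v)) := by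
  set tsv := LinearMap.toSpanSingleton R M v with htsv
  set J : Submodule R R := Submodule.map (LinearMap.toSpanSingleton R R a) (nonunitsSubmodule R)
    with hJ
  set φ : R →ₗ[R] (R ⧸ J) := J.mkQ.comp (LinearMap.toSpanSingleton R R a) with hφ
  have hker : LinearMap.ker tsv = LinearMap.ker φ := by
    ext r
    simp only [LinearMap.mem_ker, hφ, LinearMap.comp_apply, Submodule.mkQ_apply,
      Submodule.Quotient.mk_eq_zero, htsv, LinearMap.toSpanSingleton_apply]
    constructor
    · intro hrv
      have hr : ¬ IsUnit r := by
        intro hr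
        obtain ⟨w, hw⟩ := hr
        apply hv
        have : (↑w⁻¹ : R) • ((w : R) • v) = 0 := by rw [hw, hrv, smul_zero]
        rwa [← mul_smul, Units.inv_mul, one_smul] at this
      exact ⟨r, hr, rfl⟩
    · rintro ⟨x, hx, hxa⟩
      simp only [LinearMap.toSpanSingleton_apply] at hxa
      have hsub : (r - x) • a = 0 := by rw [sub_smul, hxa, sub_self]
      have hrx : ¬ IsUnit (r - x) := by
        intro hu
        obtain ⟨w, hw⟩ := hu
        apply ha0
        have : (↑w⁻¹ : R) • ((w : R) • a) = 0 := by rw [hw, hsub, smul_zero]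
        rwa [← mul_smul, Units.inv_mul, one_smul] at this
      have : ¬ IsUnit r := by
        have := my_nonunits_add hrx hx
        rwa [sub_add_cancel] at this
      exact hann r this
  have hle : LinearMap.ker tsv ≤ LinearMap.ker φ := le_of_eq hker
  refine ⟨R ⧸ J, inferInstance, inferInstance,
    (Submodule.liftQ (LinearMap.ker tsv) φ hle).comp
      (tsv.quotKerEquivRange.symm : ↥(LinearMap.range tsv) →ₗ[R] (R ⧸ LinearMap.ker tsv)), ?_, ?_⟩
  · have hinj : Function.Injective (Submodule.liftQ (LinearMap.ker tsv) φ hle) := by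
      rw [← LinearMap.ker_eq_bot, Submodule.ker_liftQ_eq_bot' _ _ hker]
    exact hinj.comp tsv.quotKerEquivRange.symm.injective
  · intro X hX
    have hrange : LinearMap.range ((Submodule.liftQ (LinearMap.ker tsv) φ hle).comp
        (tsv.quotKerEquivRange.symm : ↥(LinearMap.range tsv) →ₗ[R] (R ⧸ LinearMap.ker tsv)))
        = LinearMap.range φ := by
      rw [LinearMap.range_comp, LinearEquiv.range, Submodule.map_top, Submodule.range_liftQ]
    rw [hrange] at hX
    have hmem : J.mkQ 1 ∈ LinearMap.range φ ⊔ X := hX ▸ Submodule.mem_top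
    obtain ⟨y, hy, x, hx, hyx⟩ := Submodule.mem_sup.1 hmem
    obtain ⟨r, hr⟩ := hy
    have hxval : x = J.mkQ (1 - r * a) := by
      have hy' : y = J.mkQ (r * a) := by
        rw [← hr]; simp [hφ, LinearMap.toSpanSingleton_apply, smul_eq_mul]
      rw [map_sub, ← hy', ← hyx]
      abel
    obtain ⟨w, hw⟩ := my_unit_one_sub (my_nonunit_mul r ha)
    have h1X : J.mkQ 1 ∈ X := by
      have : J.mkQ 1 = (↑w⁻¹ : R) • x := by
        rw [hxval, ← hw, ← map_smul, smul_eq_mul, Units.inv_mul]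
      exact this ▸ X.smul_mem _ hx
    rw [eq_top_iff]
    intro z _
    obtain ⟨s, rfl⟩ := J.mkQ_surjective z
    have : J.mkQ s = s • J.mkQ 1 := by rw [← map_smul, smul_eq_mul, mul_one]
    exact this ▸ X.smul_mem s h1X
end ModuleLemmas


section Key
variable {R M : Type u} [Ring R] [IsLocalRing R] [AddCommGroup M] [Module R M]

theorem zstar_ne_bot (ex : ∃ a : R, a ≠ 0 ∧ ¬ IsUnit a) {v : M} (hv : v ≠ 0) :
    ZStar R M ≠ ⊥ := by
  obtain ⟨a, ha0, ha⟩ := ex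
  have key : ∃ N : Submodule R M, N ≠ ⊥ ∧ IsSmallModule R ↥N := by
    by_cases hb : ∃ b : R, ¬ IsUnit b ∧ b • v ≠ 0
    · obtain ⟨b, hb, hbv⟩ := hb
      exact ⟨Submodule.span R {b • v}, by
        simpa [Submodule.span_singleton_eq_bot] using hbv, smallA hb hbv⟩
    · push_neg at hb
      have hann : ∀ b : R, ¬ IsUnit b → b • v = 0 := hb
      refine ⟨LinearMap.range (LinearMap.toSpanSingleton R M v), ?_, smallB ha0 ha hv hann⟩
      intro hbot
      apply hv
      have : v ∈ LinearMap.range (LinearMap.toSpanSingleton R M v) :=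
        ⟨1, by simp⟩
      rw [hbot] at this
      simpa using this
  obtain ⟨N, hN, hsmall⟩ := key
  intro hz
  apply hN
  have : N ≤ ZStar R M := le_sSup hsmall
  rw [hz, le_bot_iff] at this
  exact this

theorem isCGTorsion_of_ex (ex : ∃ a : R, a ≠ 0 ∧ ¬ IsUnit a) : IsCGTorsion R R := by
  intro U V hUV
  obtain ⟨x, hxV, hxU⟩ := SetLike.exists_of_lt hUV
  have hv : (Submodule.Quotient.mk (⟨x, hxV⟩ : ↥V) :
      ↥V ⧸ Submodule.comap V.subtype U) ≠ 0 := by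
    intro h0
    rw [Submodule.Quotient.mk_eq_zero] at h0
    exact hxU h0
  exact zstar_ne_bot ex hv
end Key

instance mop_isLocalRing {R : Type u} [Ring R] [IsLocalRing R] : IsLocalRing Rᵐᵒᵖ := by
  constructor
  intro a b hab
  have h : a.unop + b.unop = 1 := by
    have := congrArg MulOpposite.unop hab
    simpa using this
  rcases IsLocalRing.isUnit_or_isUnit_of_add_one (by rw [add_comm] at h; exact h) with hh | hh
  · right
    rw [← MulOpposite.op_unop b]
    exact isUnit_op.2 hh
  · left
    rw [← MulOpposite.op_unop a]
    exact isUnit_op.2 hh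

/-- A local ring that is not a division ring is left and right almost small. -/
theorem stmt_6 (R : Type u) [Ring R] [IsLocalRing R]
    (h : ¬ ∀ a : R, a ≠ 0 → IsUnit a) :
    IsCGTorsion R R ∧ IsCGTorsion Rᵐᵒᵖ Rᵐᵒᵖ := by
  push_neg at h
  obtain ⟨a, ha0, hau⟩ := h
  refine ⟨isCGTorsion_of_ex ⟨a, ha0, hau⟩, isCGTorsion_of_ex ⟨MulOpposite.op a, ?_, ?_⟩⟩
  · exact (MulOpposite.op_ne_zero_iff a).2 ha0
  · exact fun hu => hau (isUnit_op.1 hu)
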